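/- Let V be a non-singular orthogonal geometry over a field F of characteristic ≠ 2, and let x ∈ Γ(V). Then the isometry ρ(x): v ↦ x v (x')⁻¹ has determinant 1 (i.e., ρ(x) ∈ SO(V)) if and only if x lies in the even part C⁰(V) (i.e., x' = x). Consequently, the restriction ρ₀ of ρ to Γ⁰(V) = Γ(V) ∩ C⁰(V) gives a short exact sequence 1 → F^× → Γ⁰(V) → SO(V) → 1. -/

import Mathlib

open CliffordAlgebra

namespace Stmt5
open FiniteDimensional Module CliffordAlgebra


variable {F : Type*} [Field F] {V : Type*} [AddCommGroup V] [Module F V]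

noncomputable def rfl' (S : LinearMap.BilinForm F V) (w : V) : V →ₗ[F] V :=
  LinearMap.id - (S w).smulRight ((2 * (S w w)⁻¹) • w)

lemma rfl'_apply (S : LinearMap.BilinForm F V) (w v : V) :
    rfl' S w v = v - (2 * (S w w)⁻¹ * S w v) • w := by
  simp [rfl', smul_smul]
  ring_nf

lemma det_id_add_smulRight [FiniteDimensional F V] (f : V →ₗ[F] F) (x : V) :
    LinearMap.det (LinearMap.id + f.smulRight x) = 1 + f x := by
  classical
  set b := Module.finBasis F V with hb
  rw [← LinearMap.det_toMatrix b]
  have h : LinearMap.toMatrix b b (LinearMap.id + f.smulRight x)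
      = 1 + Matrix.replicateCol Unit (fun i => b.repr x i) * Matrix.replicateRow Unit (fun j => f (b j)) := by
    ext i j
    simp [LinearMap.toMatrix_apply, Matrix.mul_apply, map_smul, mul_comm, Matrix.one_apply,
      Finsupp.single_apply, eq_comm]
  rw [h, Matrix.det_one_add_replicateCol_mul_replicateRow]
  congr 1
  rw [dotProduct]
  conv_rhs => rw [← b.sum_repr x]
  simp only [map_sum, map_smul, smul_eq_mul, mul_comm]

variable {S : LinearMap.BilinForm F V}

lemma rfl'_det [FiniteDimensional F V] {w : V} (hw : S w w ≠ 0) :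
    LinearMap.det (rfl' S w) = -1 := by
  have h : rfl' S w = LinearMap.id + (S w).smulRight ((-(2 * (S w w)⁻¹)) • w) := by
    ext v
    simp [rfl'_apply, smul_smul, sub_eq_add_neg]
    ring_nf
  rw [h, det_id_add_smulRight]
  simp only [map_smul, smul_eq_mul]
  field_simp
  ring

lemma rfl'_isometry (hS : ∀ x y, S x y = S y x) {w : V} (hw : S w w ≠ 0) (x y : V) :
    S (rfl' S w x) (rfl' S w y) = S x y := by
  simp only [rfl'_apply, map_sub, map_smul, LinearMap.sub_apply, LinearMap.smul_apply,
    smul_eq_mul]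
  rw [hS x w]
  field_simp
  ring

lemma rfl'_invol {w : V} (hw : S w w ≠ 0) :
    rfl' S w * rfl' S w = 1 := by
  ext v
  show rfl' S w (rfl' S w v) = v
  simp only [rfl'_apply, map_sub, map_smul, smul_eq_mul]
  match_scalars
  · ring
  · field_simp
    ring

lemma prod_rfl'_isometry (hS : ∀ x y, S x y = S y x) :
    ∀ (l : List V), (∀ w ∈ l, S w w ≠ 0) →
      ∀ x y, S (((l.map (rfl' S)).prod) x) (((l.map (rfl' S)).prod) y) = S x y := by
  intro l
  induction l with
  | nil => intro _ x y; simp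
  | cons w l ihl =>
    intro hl x y
    simp only [List.map_cons, List.prod_cons, Module.End.mul_apply]
    rw [rfl'_isometry hS (hl w (List.mem_cons_self))]
    exact ihl (fun w hw => hl w (List.mem_cons_of_mem _ hw)) x y

lemma prod_rfl'_reverse :
    ∀ (l : List V), (∀ w ∈ l, S w w ≠ 0) →
      ((l.reverse.map (rfl' S)).prod) * ((l.map (rfl' S)).prod) = 1 := by
  intro l
  induction l with
  | nil => intro _; simp
  | cons w l ihl =>
    intro hl
    have hw := hl w (List.mem_cons_self)
    have hrest := ihl (fun w hw => hl w (List.mem_cons_of_mem _ hw))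
    simp only [List.reverse_cons, List.map_append, List.prod_append, List.map_cons,
      List.prod_cons, List.map_nil, List.prod_nil, mul_one]
    rw [mul_assoc, ← mul_assoc (rfl' S w), rfl'_invol hw, one_mul, hrest]

lemma prod_rfl'_det [FiniteDimensional F V] :
    ∀ (l : List V), (∀ w ∈ l, S w w ≠ 0) →
      LinearMap.det ((l.map (rfl' S)).prod) = (-1) ^ l.length := by
  intro l
  induction l with
  | nil => intro _; simp
  | cons w l ihl =>
    intro hl
    simp only [List.map_cons, List.prod_cons, List.length_cons, map_mul]
    rw [rfl'_det (hl w (List.mem_cons_self)), ihl (fun w hw => hl w (List.mem_cons_of_mem _ hw)),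
      pow_succ]
    ring




section CD
variable {F : Type*} [Field F]

theorem cartan_dieudonne (hchar : (2:F) ≠ 0) :
    ∀ (n : ℕ) (V : Type*) [AddCommGroup V] [Module F V] [FiniteDimensional F V]
      (S : LinearMap.BilinForm F V), finrank F V = n →
      (∀ x y, S x y = S y x) → (∀ x, (∀ y, S x y = 0) → x = 0) →
      ∀ (τ : V →ₗ[F] V), (∀ x y, S (τ x) (τ y) = S x y) →
      ∃ l : List V, (∀ w ∈ l, S w w ≠ 0) ∧ τ = (l.map (rfl' S)).prod := by
  intro n
  induction n with
  | zero =>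
    intro V _ _ _ S hrank hS hnd τ hτ
    refine ⟨[], by simp, ?_⟩
    have hsub : Subsingleton V := by
      rw [← finrank_zero_iff (R := F)]
      omega
    ext v
    simp [Subsingleton.elim v 0]
  | succ n ih =>
    intro V _ _ _ S hrank hS hnd τ hτ
    have hnt : Nontrivial V := Module.nontrivial_of_finrank_pos (R := F) (by omega)
    -- find an anisotropic vector
    obtain ⟨e, he⟩ : ∃ e : V, S e e ≠ 0 := by
      by_contra hcon
      push_neg at hcon
      obtain ⟨x, hx⟩ := exists_ne (0 : V)
      apply hx
      apply hnd
      intro y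
      have h0 : S (x + y) (x + y) = 0 := hcon _
      have h1 : S x x = 0 := hcon x
      have h2 : S y y = 0 := hcon y
      have h3 : S y x = S x y := hS y x
      simp only [map_add, LinearMap.add_apply] at h0
      have h4 : 2 * S x y = 0 := by linear_combination h0 - h1 - h2 - h3
      rcases mul_eq_zero.mp h4 with h | h
      · exact absurd h hchar
      · exact h
    set y := τ e with hy
    have hyy : S y y = S e e := hτ e e
    -- a product of reflections sending y back to e
    obtain ⟨l₀, hl₀a, hl₀e⟩ : ∃ l₀ : List V, (∀ w ∈ l₀, S w w ≠ 0) ∧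
        ((l₀.map (rfl' S)).prod) y = e := by
      by_cases h1 : S (y - e) (y - e) ≠ 0
      · refine ⟨[y - e], by simpa using h1, ?_⟩
        have hsw : S (y - e) (y - e) = 2 * S (y - e) y := by
          simp only [map_sub, LinearMap.sub_apply]
          linear_combination -hyy - hS y e
        have hd : S (y - e) y ≠ 0 := by
          intro h
          exact h1 (by rw [hsw, h, mul_zero])
        have h2d : (2:F) * S (y - e) y ≠ 0 := mul_ne_zero hchar hd
        simp only [List.map_cons, List.map_nil, List.prod_cons, List.prod_nil, mul_one]
        rw [rfl'_apply, hsw]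
        have hc : 2 * (2 * S (y - e) y)⁻¹ * S (y - e) y = 1 := by
          rw [show (2:F) * (2 * S (y - e) y)⁻¹ * S (y - e) y
            = (2 * S (y - e) y) * (2 * S (y - e) y)⁻¹ by ring, mul_inv_cancel₀ h2d]
        rw [hc, one_smul]
        abel
      · push_neg at h1
        have h2 : S (y + e) (y + e) = 4 * S e e := by
          simp only [map_add, LinearMap.add_apply]
          have := h1
          simp only [map_sub, LinearMap.sub_apply] at this
          linear_combination 2*hyy - this
        have h2' : S (y + e) (y + e) ≠ 0 := by
          rw [h2]
          exact mul_ne_zero (by rw [show (4:F) = 2*2 by norm_num]; exact mul_ne_zero hchar hchar) he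
        refine ⟨[e, y + e], ?_, ?_⟩
        · intro w hw
          simp only [List.mem_cons, List.not_mem_nil, or_false] at hw
          rcases hw with rfl | rfl
          · exact he
          · exact h2'
        · simp only [List.map_cons, List.map_nil, List.prod_cons, List.prod_nil, mul_one,
            Module.End.mul_apply]
          have hsw : S (y + e) (y + e) = 2 * S (y + e) y := by
            simp only [map_add, LinearMap.add_apply]
            linear_combination -hyy + hS y e
          have hd : S (y + e) y ≠ 0 := by
            intro h
            exact h2' (by rw [hsw, h, mul_zero])
          have h2d : (2:F) * S (y + e) y ≠ 0 := mul_ne_zero hchar hd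
          have hstep : rfl' S (y + e) y = -e := by
            rw [rfl'_apply, hsw]
            have hc : 2 * (2 * S (y + e) y)⁻¹ * S (y + e) y = 1 := by
              rw [show (2:F) * (2 * S (y + e) y)⁻¹ * S (y + e) y
                = (2 * S (y + e) y) * (2 * S (y + e) y)⁻¹ by ring, mul_inv_cancel₀ h2d]
            rw [hc, one_smul]
            abel
          rw [hstep, map_neg, rfl'_apply]
          have hc : 2 * (S e e)⁻¹ * S e e = 2 := by
            rw [show (2:F) * (S e e)⁻¹ * S e e = 2 * (S e e * (S e e)⁻¹) by ring,
              mul_inv_cancel₀ he, mul_one]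
          rw [hc]
          module
    set σ : V →ₗ[F] V := (l₀.map (rfl' S)).prod with hσ
    set τ' : V →ₗ[F] V := σ * τ with hτ'
    have hτ'e : τ' e = e := hl₀e
    have hτ'iso : ∀ x y, S (τ' x) (τ' y) = S x y := by
      intro a b
      show S (σ (τ a)) (σ (τ b)) = S a b
      rw [prod_rfl'_isometry hS l₀ hl₀a, hτ a b]
    -- the orthogonal complement of e
    set W := LinearMap.ker (S e) with hW
    have heW : ∀ w : V, w ∈ W ↔ S e w = 0 := fun w => LinearMap.mem_ker
    have hfr : finrank F W = n := by
      have hsurj : Function.Surjective (S e) := by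
        intro c
        refine ⟨(c * (S e e)⁻¹) • e, ?_⟩
        simp only [map_smul, smul_eq_mul]
        field_simp
      have hr := LinearMap.finrank_range_add_finrank_ker (S e)
      rw [LinearMap.range_eq_top.mpr hsurj, finrank_top, finrank_self, hrank] at hr
      show finrank F (LinearMap.ker (S e)) = n
      omega
    set S' := S.restrict W with hS'def
    have hS'app : ∀ a b : W, S' a b = S (a : V) (b : V) := fun a b => rfl
    have hS'symm : ∀ a b : W, S' a b = S' b a := fun a b => hS (a : V) (b : V)
    have hdecomp : ∀ v : V, v - ((S e e)⁻¹ * S e v) • e ∈ W := by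
      intro v
      rw [heW]
      simp only [map_sub, map_smul, smul_eq_mul]
      field_simp
      ring
    have hS'nd : ∀ a : W, (∀ b : W, S' a b = 0) → a = 0 := by
      intro a ha
      have : (a : V) = 0 := by
        apply hnd
        intro v
        have hv : v = ((S e e)⁻¹ * S e v) • e + (v - ((S e e)⁻¹ * S e v) • e) := by abel
        have h1 : S (a : V) e = 0 := by
          rw [hS (a : V) e]
          exact (heW _).mp a.2
        have h2 : S (a : V) (v - ((S e e)⁻¹ * S e v) • e) = 0 := ha ⟨_, hdecomp v⟩
        rw [hv]
        simp only [map_add, map_smul, smul_eq_mul, h2, h1]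
        ring
      exact Subtype.ext this
    have hpres : ∀ x ∈ W, τ' x ∈ W := by
      intro x hx
      rw [heW] at hx ⊢
      calc S e (τ' x) = S (τ' e) (τ' x) := by rw [hτ'e]
        _ = S e x := hτ'iso e x
        _ = 0 := hx
    set τW : W →ₗ[F] W := τ'.restrict hpres with hτW
    have hτWapp : ∀ x : W, (τW x : V) = τ' (x : V) := fun x => rfl
    have hτWiso : ∀ a b : W, S' (τW a) (τW b) = S' a b := by
      intro a b
      rw [hS'app, hS'app, hτWapp, hτWapp]
      exact hτ'iso _ _
    obtain ⟨lW, hlWa, hlWeq⟩ := ih W S' hfr hS'symm hS'nd τW hτWiso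
    set l₁ : List V := lW.map (fun w : W => (w : V)) with hl₁
    have hl₁a : ∀ w ∈ l₁, S w w ≠ 0 := by
      intro w hw
      rw [hl₁] at hw
      obtain ⟨w', hw', rfl⟩ := List.mem_map.mp hw
      exact hlWa w' hw'
    -- compatibility of reflections with the subspace
    have hcompat : ∀ (lw : List W),
        (((lw.map (fun w : W => (w : V))).map (rfl' S)).prod) e = e ∧
        ∀ x : W, (((lw.map (fun w : W => (w : V))).map (rfl' S)).prod) (x : V)
          = (((lw.map (rfl' S')).prod) x : V) := by
      intro lw
      induction lw with
      | nil => exact ⟨by simp, by simp⟩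
      | cons w lw ihw =>
        obtain ⟨ih1, ih2⟩ := ihw
        have hwe : S (w : V) e = 0 := by
          rw [hS (w : V) e]
          exact (heW _).mp w.2
        constructor
        · simp only [List.map_cons, List.prod_cons, Module.End.mul_apply]
          rw [ih1, rfl'_apply, hwe, mul_zero, zero_smul, sub_zero]
        · intro x
          simp only [List.map_cons, List.prod_cons, Module.End.mul_apply]
          rw [ih2 x]
          set z := ((lw.map (rfl' S')).prod) x with hz
          rw [rfl'_apply, rfl'_apply]
          push_cast
          rw [hS'app, hS'app]
    obtain ⟨hfix, hrestr⟩ := hcompat lW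
    have hl₁fix : ((l₁.map (rfl' S)).prod) e = e := by rw [hl₁]; exact hfix
    have hτ'eq : τ' = (l₁.map (rfl' S)).prod := by
      ext v
      have hv : v = ((S e e)⁻¹ * S e v) • e + (v - ((S e e)⁻¹ * S e v) • e) := by abel
      set c := (S e e)⁻¹ * S e v
      set v' : W := ⟨v - c • e, hdecomp v⟩ with hv'
      have : v = c • e + (v' : V) := hv
      rw [this]
      simp only [map_add, map_smul]
      rw [hτ'e, hl₁fix]
      congr 1
      have h1 : τ' (v' : V) = (τW v' : V) := rfl
      have h2 : ((l₁.map (rfl' S)).prod) (v' : V) = (((lW.map (rfl' S')).prod) v' : V) := by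
        rw [hl₁]; exact hrestr v'
      rw [h1, h2, hlWeq]
    -- put things together
    refine ⟨l₀.reverse ++ l₁, ?_, ?_⟩
    · intro w hw
      rcases List.mem_append.mp hw with hw | hw
      · exact hl₀a w (List.mem_reverse.mp hw)
      · exact hl₁a w hw
    · have hinv := prod_rfl'_reverse l₀ hl₀a
      have : ((l₀.reverse.map (rfl' S)).prod) * τ' = τ := by
        rw [hτ', ← mul_assoc, hinv, one_mul]
      rw [← this, hτ'eq, List.map_append, List.prod_append]
end CD




variable (Q : QuadraticForm F V)

lemma mem_adjoin_range_ι (x : CliffordAlgebra Q) :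
    x ∈ Algebra.adjoin F (Set.range (ι Q)) := by
  induction x using CliffordAlgebra.induction with
  | algebraMap r => exact Subalgebra.algebraMap_mem _ r
  | ι v => exact Algebra.subset_adjoin ⟨v, rfl⟩
  | mul x y hx hy => exact mul_mem hx hy
  | add x y hx hy => exact add_mem hx hy

lemma adjoin_leftmul (G : Set (CliffordAlgebra Q)) (W : Submodule F (CliffordAlgebra Q))
    (hG : ∀ g ∈ G, ∀ w ∈ W, g * w ∈ W) :
    ∀ x ∈ Algebra.adjoin F G, ∀ w ∈ W, x * w ∈ W := by
  intro x hx
  induction hx using Algebra.adjoin_induction with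
  | mem g hg => exact hG g hg
  | algebraMap r =>
    intro w hw
    rw [Algebra.algebraMap_eq_smul_one, smul_mul_assoc, one_mul]
    exact W.smul_mem r hw
  | add x y hx hy ihx ihy =>
    intro w hw
    rw [add_mul]
    exact W.add_mem (ihx w hw) (ihy w hw)
  | mul x y hx hy ihx ihy =>
    intro w hw
    rw [mul_assoc]
    exact ihx _ (ihy w hw)

lemma adjoin_mem_of_leftmul (G : Set (CliffordAlgebra Q)) (W : Submodule F (CliffordAlgebra Q))
    (h1 : (1 : CliffordAlgebra Q) ∈ W)
    (hG : ∀ g ∈ G, ∀ w ∈ W, g * w ∈ W) {x : CliffordAlgebra Q}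
    (hx : x ∈ Algebra.adjoin F G) : x ∈ W := by
  have := adjoin_leftmul Q G W hG x hx 1 h1
  rwa [mul_one] at this

lemma total_of_leftmul (W : Submodule F (CliffordAlgebra Q))
    (h1 : (1 : CliffordAlgebra Q) ∈ W)
    (hmul : ∀ (v : V), ∀ w ∈ W, ι Q v * w ∈ W) (x : CliffordAlgebra Q) : x ∈ W := by
  refine adjoin_mem_of_leftmul Q (Set.range (ι Q)) W h1 ?_ (mem_adjoin_range_ι Q x)
  rintro g ⟨v, rfl⟩
  exact hmul v

/-- The key twisted-commutator identity. -/
lemma iota_mul_comm (v : V) (x : CliffordAlgebra Q) :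
    ι Q v * x - involute x * ι Q v = contractLeft (Q := Q) (QuadraticMap.polarBilin Q v) x := by
  set d : Module.Dual F V := QuadraticMap.polarBilin Q v with hd
  set Φ : CliffordAlgebra Q →ₗ[F] CliffordAlgebra Q :=
    LinearMap.mulLeft F (ι Q v) - (LinearMap.mulRight F (ι Q v)).comp involute.toLinearMap
      - contractLeft (Q := Q) d with hΦ
  have happ : ∀ y, Φ y = ι Q v * y - involute y * ι Q v - contractLeft (Q := Q) d y :=
    fun y => rfl
  have hker : ∀ y, y ∈ LinearMap.ker Φ := by
    refine total_of_leftmul Q _ ?_ ?_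
    · rw [LinearMap.mem_ker, happ]
      simp [contractLeft_one]
    · intro u w hw
      rw [LinearMap.mem_ker, happ] at hw ⊢
      have h1 : involute (ι Q u * w) = -(ι Q u * involute w) := by
        rw [map_mul, involute_ι, neg_mul]
      have h2 : contractLeft (Q := Q) d (ι Q u * w)
          = d u • w - ι Q u * contractLeft (Q := Q) d w := contractLeft_ι_mul d u w
      have h3 : ι Q v * ι Q u = algebraMap F _ (QuadraticMap.polar Q v u) - ι Q u * ι Q v :=
        eq_sub_of_add_eq (ι_mul_ι_add_swap v u)
      have hdu : d u = QuadraticMap.polar Q v u := QuadraticMap.polarBilin_apply_apply Q v u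
      have key : ι Q u * (ι Q v * w - involute w * ι Q v - contractLeft (Q := Q) d w) = 0 := by
        rw [hw, mul_zero]
      rw [h1, h2, neg_mul, sub_neg_eq_add, ← mul_assoc, h3, hdu, sub_mul, ← Algebra.smul_def]
      have key' : ι Q u * (ι Q v * w)
          = ι Q u * (involute w * ι Q v) + ι Q u * contractLeft (Q := Q) d w := by
        have h4 : ι Q u * (ι Q v * w) - ι Q u * (involute w * ι Q v)
            - ι Q u * contractLeft (Q := Q) d w = 0 := by
          rw [← mul_sub, ← mul_sub, hw, mul_zero]
        rw [sub_sub, sub_eq_zero] at h4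
        exact h4
      simp only [mul_assoc]
      rw [key']
      abel
  have := hker x
  rw [LinearMap.mem_ker, happ, sub_eq_zero] at this
  exact this

/-- If all contractions of `x` vanish, `x` is a scalar (given an orthogonal basis). -/
lemma scalar_of_contract_zero {n : ℕ} (e : Basis (Fin n) F V)
    (horth : ∀ i j : Fin n, i ≠ j → QuadraticMap.polar Q (e i) (e j) = 0)
    (x : CliffordAlgebra Q)
    (hx : ∀ f : Module.Dual F V, contractLeft (Q := Q) f x = 0) :
    ∃ c : F, x = algebraMap F _ c := by
  classical
  set A : ℕ → Subalgebra F (CliffordAlgebra Q) :=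
    fun k => Algebra.adjoin F (ι Q '' (e '' {i : Fin n | k ≤ (i : ℕ)})) with hA
  have h0 : x ∈ A 0 := by
    refine Algebra.adjoin_le ?_ (mem_adjoin_range_ι Q x)
    rintro z ⟨v, rfl⟩
    have hv : ι Q v = ∑ i, e.repr v i • ι Q (e i) := by
      conv_lhs => rw [← e.sum_repr v]
      rw [map_sum]
      simp_rw [map_smul]
    rw [hv]
    refine Subalgebra.sum_mem _ fun i _ => Subalgebra.smul_mem _ ?_ _
    exact Algebra.subset_adjoin ⟨e i, ⟨i, by simp, rfl⟩, rfl⟩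
  have hstep : ∀ k, x ∈ A k → x ∈ A (k + 1) := by
    intro k hxk
    by_cases hk : k < n
    case neg =>
      have hsets : {i : Fin n | k ≤ (i : ℕ)} = {i : Fin n | k + 1 ≤ (i : ℕ)} := by
        ext i
        have := i.isLt
        simp only [Set.mem_setOf_eq]
        omega
      rw [hA] at hxk ⊢
      simp only at hxk ⊢
      rwa [hsets] at hxk
    case pos =>
      set t : Fin n := ⟨k, hk⟩ with ht
      set s' : Set (Fin n) := {i : Fin n | k + 1 ≤ (i : ℕ)} with hs'
      have hins : {i : Fin n | k ≤ (i : ℕ)} = insert t s' := by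
        ext i
        simp only [Set.mem_setOf_eq, Set.mem_insert_iff, hs', Fin.ext_iff, ht]
        omega
      have htns : (t : ℕ) = k := rfl
      set A' : Subalgebra F (CliffordAlgebra Q) := A (k + 1) with hA'
      have hA'gen : A' = Algebra.adjoin F (ι Q '' (e '' s')) := rfl
      set W : Submodule F (CliffordAlgebra Q) :=
        Subalgebra.toSubmodule A' ⊔
          Submodule.map (LinearMap.mulLeft F (ι Q (e t))) (Subalgebra.toSubmodule A') with hW
      have hmemW : ∀ z, z ∈ W ↔ ∃ a ∈ A', ∃ b ∈ A', z = a + ι Q (e t) * b := by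
        intro z
        rw [hW, Submodule.mem_sup]
        constructor
        · rintro ⟨a, ha, z', hz', rfl⟩
          obtain ⟨b, hb, rfl⟩ := Submodule.mem_map.mp hz'
          exact ⟨a, ha, b, hb, rfl⟩
        · rintro ⟨a, ha, b, hb, rfl⟩
          exact ⟨a, ha, ι Q (e t) * b, Submodule.mem_map.mpr ⟨b, hb, rfl⟩, rfl⟩
      have hxW : x ∈ W := by
        refine adjoin_mem_of_leftmul Q (ι Q '' (e '' insert t s')) W ?_ ?_ ?_
        · exact (hmemW 1).mpr ⟨1, one_mem _, 0, zero_mem _, by simp⟩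
        · rintro g ⟨-, ⟨j, hj, rfl⟩, rfl⟩ w hw
          obtain ⟨a, ha, b, hb, rfl⟩ := (hmemW w).mp hw
          rcases hj with rfl | hj
          · -- j = t
            refine (hmemW _).mpr ⟨Q (e t) • b, Subalgebra.smul_mem _ hb _, a, ha, ?_⟩
            rw [mul_add, ← mul_assoc, ι_sq_scalar, Algebra.smul_def]
            try abel
          · -- j ∈ s'
            have hjt : j ≠ t := by
              intro h
              rw [h, ht] at hj
              simp only [hs', Set.mem_setOf_eq] at hj
              omega
            have hanti : ι Q (e j) * ι Q (e t) = -(ι Q (e t) * ι Q (e j)) := by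
              have := ι_mul_ι_add_swap (Q := Q) (e j) (e t)
              rw [horth j t hjt, map_zero] at this
              exact eq_neg_of_add_eq_zero_left this
            have hja : ι Q (e j) ∈ A' := Algebra.subset_adjoin ⟨e j, ⟨j, hj, rfl⟩, rfl⟩
            refine (hmemW _).mpr ⟨ι Q (e j) * a, mul_mem hja ha,
              -(ι Q (e j) * b), neg_mem (mul_mem hja hb), ?_⟩
            rw [mul_add, ← mul_assoc, hanti, mul_neg, neg_mul, mul_assoc]
            try abel
        · rw [hA] at hxk
          simp only at hxk
          rw [hins] at hxk
          exact hxk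
      obtain ⟨a, ha, b, hb, hxab⟩ := (hmemW x).mp hxW
      set f : Module.Dual F V := e.coord t with hf
      have hft : f (e t) = 1 := by simp [hf]
      have hfs : ∀ j ∈ s', f (e j) = 0 := by
        intro j hj
        have hjt : j ≠ t := by
          intro h
          rw [h, ht] at hj
          simp only [hs', Set.mem_setOf_eq] at hj
          omega
        simp [hf, Basis.coord_apply, Basis.repr_self_apply, hjt]
      have hkill : ∀ y ∈ A', contractLeft (Q := Q) f y = 0 := by
        intro y hy
        have : y ∈ LinearMap.ker (contractLeft (Q := Q) f) := by
          refine adjoin_mem_of_leftmul Q _ _ ?_ ?_ hy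
          · rw [LinearMap.mem_ker]
            exact contractLeft_one Q f
          · rintro g ⟨_, ⟨j, hj, rfl⟩, rfl⟩ w hw
            rw [LinearMap.mem_ker] at hw ⊢
            rw [contractLeft_ι_mul, hw, hfs j hj, zero_smul, mul_zero, sub_zero]
        rwa [LinearMap.mem_ker] at this
      have hb0 : b = 0 := by
        have h1 := hx f
        rw [hxab, map_add, hkill a ha, contractLeft_ι_mul, hkill b hb, hft, one_smul,
          mul_zero, sub_zero, zero_add] at h1
        exact h1
      rw [hxab, hb0, mul_zero, add_zero]
      exact ha
  have hxn : x ∈ A n := by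
    have hall : ∀ k, x ∈ A k := by
      intro k
      induction k with
      | zero => exact h0
      | succ k ihk => exact hstep k ihk
    exact hall n
  have hempty : {i : Fin n | n ≤ (i : ℕ)} = ∅ := by
    ext i
    have := i.isLt
    simp only [Set.mem_setOf_eq, Set.mem_empty_iff_false, iff_false]
    omega
  rw [hA] at hxn
  simp only at hxn
  rw [hempty] at hxn
  simp only [Set.image_empty, Algebra.adjoin_empty, Algebra.mem_bot, Set.mem_range] at hxn
  obtain ⟨c, hc⟩ := hxn
  exact ⟨c, hc.symm⟩


lemma algebraMap_mem_evenOdd_zero (c : F) :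
    algebraMap F (CliffordAlgebra Q) c ∈ evenOdd Q 0 := by
  apply one_le_evenOdd_zero Q
  rw [Submodule.one_eq_range]
  exact ⟨c, rfl⟩

lemma even_of_involute_fixed (hchar : (2 : F) ≠ 0) {x : CliffordAlgebra Q}
    (hx : involute x = x) : x ∈ evenOdd Q 0 := by
  have hsup : evenOdd Q 0 ⊔ evenOdd Q 1 = ⊤ := (evenOdd_isCompl Q).codisjoint.eq_top
  obtain ⟨a, ha, b, hb, hab⟩ := Submodule.mem_sup.mp
    (hsup ▸ Submodule.mem_top (x := x) (R := F))
  have hinv : involute x = a - b := by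
    rw [← hab, map_add, involute_eq_of_mem_even ha, involute_eq_of_mem_odd hb, sub_eq_add_neg]
  have hb0 : b = 0 := by
    have h2 : a - b = a + b := by rw [← hinv, hx, hab]
    have hbb : b + b = 0 := by
      have h3 : -b = b := by linear_combination (norm := abel) h2
      calc b + b = b + -b := by rw [h3]
        _ = 0 := by abel
    have h4 : (2 : F) • b = 0 := by rw [two_smul]; exact hbb
    have := congrArg (fun y => (2 : F)⁻¹ • y) h4
    simpa [smul_smul, inv_mul_cancel₀ hchar] using this
  rw [← hab, hb0, add_zero]
  exact ha

lemma kernel_scalar {n : ℕ} (e : Basis (Fin n) F V)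
    (horth : ∀ i j : Fin n, i ≠ j → QuadraticMap.polar Q (e i) (e j) = 0)
    (hdual : ∀ f : Module.Dual F V, ∃ v : V, QuadraticMap.polarBilin Q v = f)
    (z : CliffordAlgebra Q) (hz : ∀ v : V, z * ι Q v = ι Q v * involute z) :
    ∃ c : F, z = algebraMap F _ c := by
  have hsup : evenOdd Q 0 ⊔ evenOdd Q 1 = ⊤ := (evenOdd_isCompl Q).codisjoint.eq_top
  obtain ⟨a, ha, b, hb, hab⟩ := Submodule.mem_sup.mp
    (hsup ▸ Submodule.mem_top (x := z) (R := F))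
  have hinv : involute z = a - b := by
    rw [← hab, map_add, involute_eq_of_mem_even ha, involute_eq_of_mem_odd hb, sub_eq_add_neg]
  have hcomm : ∀ v : V, (a * ι Q v - ι Q v * a) + (b * ι Q v + ι Q v * b) = 0 := by
    intro v
    have h1 : z * ι Q v - ι Q v * involute z = 0 := sub_eq_zero.mpr (hz v)
    rw [hinv, ← hab, add_mul, mul_sub] at h1
    linear_combination (norm := abel) h1
  have hsplit : ∀ v : V, a * ι Q v = ι Q v * a ∧ b * ι Q v = -(ι Q v * b) := by
    intro v
    have hp : (a * ι Q v - ι Q v * a) ∈ evenOdd Q 1 := by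
      apply sub_mem
      · have := Submodule.mul_mem_mul ha (ι_mem_evenOdd_one Q v)
        have h2 := evenOdd_mul_le (Q := Q) 0 1 this
        rwa [zero_add] at h2
      · have := Submodule.mul_mem_mul (ι_mem_evenOdd_one Q v) ha
        have h2 := evenOdd_mul_le (Q := Q) 1 0 this
        rwa [add_zero] at h2
    have hq : (b * ι Q v + ι Q v * b) ∈ evenOdd Q 0 := by
      have e1 : ((1 : ZMod 2) + 1) = 0 := by decide
      apply add_mem
      · have := Submodule.mul_mem_mul hb (ι_mem_evenOdd_one Q v)
        have h2 := evenOdd_mul_le (Q := Q) 1 1 this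
        rwa [e1] at h2
      · have := Submodule.mul_mem_mul (ι_mem_evenOdd_one Q v) hb
        have h2 := evenOdd_mul_le (Q := Q) 1 1 this
        rwa [e1] at h2
    have hp0 : a * ι Q v - ι Q v * a = 0 := by
      have hmem : (a * ι Q v - ι Q v * a) ∈ evenOdd Q 0 := by
        have : a * ι Q v - ι Q v * a = -(b * ι Q v + ι Q v * b) := by
          linear_combination (norm := abel) hcomm v
        rw [this]
        exact neg_mem hq
      exact (Submodule.disjoint_def.mp (evenOdd_isCompl Q).disjoint) _ hmem hp
    refine ⟨sub_eq_zero.mp hp0, ?_⟩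
    have hq0 : b * ι Q v + ι Q v * b = 0 := by
      have := hcomm v
      rw [hp0, zero_add] at this
      exact this
    linear_combination (norm := abel) hq0
  have hca : ∀ f : Module.Dual F V, contractLeft (Q := Q) f a = 0 := by
    intro f
    obtain ⟨v, rfl⟩ := hdual f
    rw [← iota_mul_comm, involute_eq_of_mem_even ha, (hsplit v).1, sub_self]
  have hcb : ∀ f : Module.Dual F V, contractLeft (Q := Q) f b = 0 := by
    intro f
    obtain ⟨v, rfl⟩ := hdual f
    rw [← iota_mul_comm, involute_eq_of_mem_odd hb, neg_mul, sub_neg_eq_add, (hsplit v).2]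
    abel
  obtain ⟨ca, hcaeq⟩ := scalar_of_contract_zero Q e horth a hca
  obtain ⟨cb, hcbeq⟩ := scalar_of_contract_zero Q e horth b hcb
  have hb0 : b = 0 := by
    have hbe : b ∈ evenOdd Q 0 := by
      rw [hcbeq]
      exact algebraMap_mem_evenOdd_zero Q cb
    exact (Submodule.disjoint_def.mp (evenOdd_isCompl Q).disjoint) _ hbe hb
  refine ⟨ca, ?_⟩
  rw [← hab, hb0, add_zero, hcaeq]


def Rel (u : (CliffordAlgebra Q)ˣ) (σ : V →ₗ[F] V) : Prop :=
  ∀ v : V, (u : CliffordAlgebra Q) * ι Q v * involute (↑u⁻¹ : CliffordAlgebra Q) = ι Q (σ v)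

lemma rel_one : Rel Q 1 1 := by
  intro v
  simp

lemma rel_mul {u u' : (CliffordAlgebra Q)ˣ} {σ σ' : V →ₗ[F] V}
    (h : Rel Q u σ) (h' : Rel Q u' σ') : Rel Q (u * u') (σ * σ') := by
  intro v
  have hc : ((↑(u * u')⁻¹ : CliffordAlgebra Q)) = (↑u'⁻¹ : CliffordAlgebra Q) * ↑u⁻¹ := by
    rw [mul_inv_rev, Units.val_mul]
  rw [Units.val_mul, hc, map_mul, Module.End.mul_apply]
  calc ↑u * ↑u' * ι Q v * (involute (↑u'⁻¹ : CliffordAlgebra Q) * involute (↑u⁻¹ : CliffordAlgebra Q))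
      = ↑u * (↑u' * ι Q v * involute (↑u'⁻¹ : CliffordAlgebra Q)) * involute (↑u⁻¹ : CliffordAlgebra Q) := by
        simp only [mul_assoc]
    _ = ↑u * ι Q (σ' v) * involute (↑u⁻¹ : CliffordAlgebra Q) := by rw [h' v]
    _ = ι Q (σ (σ' v)) := h (σ' v)

noncomputable def uVec (w : V) (hw : Q w ≠ 0) : (CliffordAlgebra Q)ˣ where
  val := ι Q w
  inv := (Q w)⁻¹ • ι Q w
  val_inv := by
    rw [mul_smul_comm, ι_sq_scalar, Algebra.smul_def, ← map_mul, inv_mul_cancel₀ hw, map_one]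
  inv_val := by
    rw [smul_mul_assoc, ι_sq_scalar, Algebra.smul_def, ← map_mul, inv_mul_cancel₀ hw, map_one]

lemma uVec_rel (w : V) (hw : Q w ≠ 0) (v : V) :
    (↑(uVec Q w hw) : CliffordAlgebra Q) * ι Q v * involute (↑(uVec Q w hw)⁻¹ : CliffordAlgebra Q)
      = ι Q (v - ((Q w)⁻¹ * QuadraticMap.polar Q w v) • w) := by
  have hval : (↑(uVec Q w hw) : CliffordAlgebra Q) = ι Q w := rfl
  have hinv : (↑(uVec Q w hw)⁻¹ : CliffordAlgebra Q) = (Q w)⁻¹ • ι Q w := rfl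
  have key : ι Q w * ι Q v * ι Q w = QuadraticMap.polar Q w v • ι Q w - Q w • ι Q v := by
    have h3 : ι Q w * ι Q v = algebraMap F _ (QuadraticMap.polar Q w v) - ι Q v * ι Q w :=
      eq_sub_of_add_eq (ι_mul_ι_add_swap w v)
    have h4 : ι Q v * algebraMap F (CliffordAlgebra Q) (Q w) = Q w • ι Q v := by
      rw [← Algebra.commutes, ← Algebra.smul_def]
    rw [h3, sub_mul, mul_assoc, ι_sq_scalar, h4, ← Algebra.smul_def]
  rw [hval, hinv, map_smul, involute_ι, smul_neg, mul_neg, mul_smul_comm, key, map_sub, map_smul]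
  match_scalars
  · field_simp
  · field_simp

lemma uVec_rel_rfl' (S : LinearMap.BilinForm F V)
    (hQS : ∀ v, Q v = -(S v v))
    (hpolar : ∀ x y, QuadraticMap.polar Q x y = -(2 * S x y))
    (w : V) (hw : S w w ≠ 0) (hQw : Q w ≠ 0) :
    Rel Q (uVec Q w hQw) (rfl' S w) := by
  intro v
  rw [uVec_rel, rfl'_apply]
  have hco : (Q w)⁻¹ * QuadraticMap.polar Q w v = 2 * (S w w)⁻¹ * S w v := by
    rw [hQS w, hpolar w v, inv_neg, neg_mul_neg]
    ring
  rw [hco]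

lemma algebraMap_mem_evenOdd_zero' (c : F) :
    algebraMap F (CliffordAlgebra Q) c ∈ evenOdd Q 0 := by
  apply one_le_evenOdd_zero Q
  rw [Submodule.one_eq_range]
  exact ⟨c, rfl⟩

lemma rel_prod (S : LinearMap.BilinForm F V)
    (hQS : ∀ v, Q v = -(S v v))
    (hpolar : ∀ x y, QuadraticMap.polar Q x y = -(2 * S x y)) :
    ∀ (l : List V), (∀ w ∈ l, S w w ≠ 0) →
      ∃ u : (CliffordAlgebra Q)ˣ, Rel Q u ((l.map (rfl' S)).prod) ∧
        (u : CliffordAlgebra Q) ∈ evenOdd Q (l.length : ZMod 2) := by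
  intro l
  induction l with
  | nil =>
    intro _
    refine ⟨1, ?_, ?_⟩
    · simpa using rel_one Q
    · simp only [List.length_nil, Nat.cast_zero, Units.val_one]
      have := algebraMap_mem_evenOdd_zero' Q 1
      rwa [map_one] at this
  | cons w l ihl =>
    intro hl
    obtain ⟨u', hu', hmem'⟩ := ihl (fun x hx => hl x (List.mem_cons_of_mem _ hx))
    have hw : S w w ≠ 0 := hl w (List.mem_cons_self)
    have hQw : Q w ≠ 0 := by
      rw [hQS w]
      exact neg_ne_zero.mpr hw
    refine ⟨uVec Q w hQw * u', ?_, ?_⟩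
    · have := rel_mul Q (uVec_rel_rfl' Q S hQS hpolar w hw hQw) hu'
      simpa only [List.map_cons, List.prod_cons] using this
    · rw [Units.val_mul]
      have h1 : (↑(uVec Q w hQw) : CliffordAlgebra Q) ∈ evenOdd Q 1 := ι_mem_evenOdd_one Q w
      have h2 := evenOdd_mul_le (Q := Q) 1 (l.length : ZMod 2)
        (Submodule.mul_mem_mul h1 hmem')
      have hcast : ((w :: l).length : ZMod 2) = 1 + (l.length : ZMod 2) := by
        rw [List.length_cons]
        push_cast
        ring
      rwa [hcast]

lemma rel_shift {u : (CliffordAlgebra Q)ˣ} {σ : V →ₗ[F] V} (h : Rel Q u σ) :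
    ∀ v, (↑u : CliffordAlgebra Q) * ι Q v = ι Q (σ v) * involute (↑u : CliffordAlgebra Q) := by
  intro v
  have h1 : involute (↑u⁻¹ : CliffordAlgebra Q) * involute (↑u : CliffordAlgebra Q) = 1 := by
    rw [← map_mul, Units.inv_mul, map_one]
  calc (↑u : CliffordAlgebra Q) * ι Q v
      = ↑u * ι Q v * (involute (↑u⁻¹ : CliffordAlgebra Q) * involute (↑u : CliffordAlgebra Q)) := by
        rw [h1, mul_one]
    _ = (↑u * ι Q v * involute (↑u⁻¹ : CliffordAlgebra Q)) * involute (↑u : CliffordAlgebra Q) := by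
        simp only [mul_assoc]
    _ = ι Q (σ v) * involute (↑u : CliffordAlgebra Q) := by rw [h v]

lemma rel_compare {U u : (CliffordAlgebra Q)ˣ} {σ : V →ₗ[F] V}
    (hU : Rel Q U σ) (hu : Rel Q u σ) :
    ∀ v, (↑(U⁻¹ * u) : CliffordAlgebra Q) * ι Q v
      = ι Q v * involute (↑(U⁻¹ * u) : CliffordAlgebra Q) := by
  intro v
  have hUv : (↑U⁻¹ : CliffordAlgebra Q) * ι Q (σ v) = ι Q v * involute (↑U⁻¹ : CliffordAlgebra Q) := by
    rw [← hU v, ← mul_assoc, ← mul_assoc, Units.inv_mul, one_mul]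
  rw [Units.val_mul, mul_assoc, rel_shift Q hu v, ← mul_assoc, hUv, mul_assoc, ← map_mul,
    ← Units.val_mul]


end Stmt5
open Stmt5 FiniteDimensional Module

set_option maxHeartbeats 1000000 in
/-- For `x ∈ Γ(V)`, `ρ(x) ∈ SO(V)` iff `x` is even; consequently `ρ₀` gives a short
exact sequence `1 → F^× → Γ⁰(V) → SO(V) → 1` (kernel is the scalars, and every
special isometry lifts to an even element of the Clifford group). -/
theorem stmt_5 {F : Type*} [Field F] (hchar : (2 : F) ≠ 0)
    {V : Type*} [AddCommGroup V] [Module F V] [FiniteDimensional F V]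
    (S : LinearMap.BilinForm F V) (hS : ∀ x y, S x y = S y x)
    (hnd : ∀ x : V, (∀ y : V, S x y = 0) → x = 0)
    (Q : QuadraticForm F V) (hQ : ∀ v, Q v = -(S v v)) :
    (∀ (u : (CliffordAlgebra Q)ˣ) (σ : V →ₗ[F] V),
      (∀ v : V, ι Q (σ v) = (u : CliffordAlgebra Q) * ι Q v *
        involute (↑u⁻¹ : CliffordAlgebra Q)) →
      (LinearMap.det σ = 1 ↔ involute (u : CliffordAlgebra Q) = (u : CliffordAlgebra Q))) ∧
    (∀ u : (CliffordAlgebra Q)ˣ,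
      involute (u : CliffordAlgebra Q) = (u : CliffordAlgebra Q) →
      ((∀ v : V, (u : CliffordAlgebra Q) * ι Q v *
          involute (↑u⁻¹ : CliffordAlgebra Q) = ι Q v) ↔
        ∃ c : F, c ≠ 0 ∧ (u : CliffordAlgebra Q) = algebraMap F (CliffordAlgebra Q) c)) ∧
    (∀ τ : V ≃ₗ[F] V, (∀ x y, S (τ x) (τ y) = S x y) →
      LinearMap.det (τ : V →ₗ[F] V) = 1 →
      ∃ u : (CliffordAlgebra Q)ˣ,
        involute (u : CliffordAlgebra Q) = (u : CliffordAlgebra Q) ∧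
        ∀ v : V, (u : CliffordAlgebra Q) * ι Q v *
          involute (↑u⁻¹ : CliffordAlgebra Q) = ι Q (τ v)) := by
  letI : Invertible (2 : F) := invertibleOfNonzero hchar
  have hinj : Function.Injective (algebraMap F (CliffordAlgebra Q)) := RingHom.injective _
  have hpolar : ∀ x y, QuadraticMap.polar Q x y = -(2 * S x y) := by
    intro x y
    show Q (x + y) - Q x - Q y = -(2 * S x y)
    rw [hQ, hQ, hQ]
    simp only [map_add, LinearMap.add_apply]
    linear_combination hS x y
  -- orthogonal basis
  obtain ⟨e, he⟩ := LinearMap.BilinForm.exists_orthogonal_basis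
    (B := S) ⟨fun x y => hS x y⟩
  have horth : ∀ i j : Fin (finrank F V), i ≠ j → QuadraticMap.polar Q (e i) (e j) = 0 := by
    intro i j hij
    rw [hpolar, he hij, mul_zero, neg_zero]
  have hdual : ∀ f : Module.Dual F V, ∃ v : V, QuadraticMap.polarBilin Q v = f := by
    intro f
    have hnd' : S.Nondegenerate := ⟨hnd, fun y hy => hnd y (fun x => (hS y x).trans (hy x))⟩
    refine ⟨(S.toDual hnd').symm ((-(2 : F))⁻¹ • f), ?_⟩
    ext w
    rw [QuadraticMap.polarBilin_apply_apply, hpolar]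
    have h1 : S ((S.toDual hnd').symm ((-(2 : F))⁻¹ • f)) w
        = ((-(2 : F))⁻¹ • f) w := by
      rw [← LinearMap.BilinForm.toDual_def (B := S) hnd', LinearEquiv.apply_symm_apply]
    rw [h1]
    simp only [LinearMap.smul_apply, smul_eq_mul]
    have h2 : (-(2 : F)) ≠ 0 := neg_ne_zero.mpr hchar
    field_simp
  have hneg1 : (-1 : F) ≠ 1 := by
    intro h
    exact hchar (by linear_combination -h)
  have hcast_even : ∀ m : ℕ, Even m → (m : ZMod 2) = 0 := by
    intro m hm
    rw [← ZMod.natCast_mod m 2, Nat.even_iff.mp hm, Nat.cast_zero]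
  have hcast_odd : ∀ m : ℕ, Odd m → (m : ZMod 2) = 1 := by
    intro m hm
    rw [← ZMod.natCast_mod m 2, Nat.odd_iff.mp hm, Nat.cast_one]
  refine ⟨?_, ?_, ?_⟩
  · -- Part 1
    intro u σ hσrel
    have hrel : Rel Q u σ := fun v => (hσrel v).symm
    have hbc : involute (↑u⁻¹ : CliffordAlgebra Q) * involute (↑u : CliffordAlgebra Q) = 1 := by
      rw [← map_mul, Units.inv_mul, map_one]
    have hrel' : ∀ v, ι Q (σ v)
        = involute (↑u : CliffordAlgebra Q) * ι Q v * (↑u⁻¹ : CliffordAlgebra Q) := by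
      intro v
      have h := congrArg involute (hrel v)
      simp only [map_mul, involute_ι, involute_involute, mul_neg, neg_mul] at h
      exact (neg_inj.mp h).symm
    have hQiso : ∀ v, Q (σ v) = Q v := by
      intro v
      apply hinj
      have hh : algebraMap F (CliffordAlgebra Q) (Q (σ v))
          = ((↑u : CliffordAlgebra Q) * ι Q v * involute (↑u⁻¹ : CliffordAlgebra Q))
            * (involute (↑u : CliffordAlgebra Q) * ι Q v * (↑u⁻¹ : CliffordAlgebra Q)) := by
        rw [← ι_sq_scalar (Q := Q) (σ v)]
        nth_rewrite 1 [← hrel v]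
        rw [hrel' v]
      rw [hh]
      have hmid : involute (↑u⁻¹ : CliffordAlgebra Q)
          * (involute (↑u : CliffordAlgebra Q) * (ι Q v * (↑u⁻¹ : CliffordAlgebra Q)))
          = ι Q v * (↑u⁻¹ : CliffordAlgebra Q) := by
        rw [← mul_assoc, hbc, one_mul]
      calc ((↑u : CliffordAlgebra Q) * ι Q v * involute (↑u⁻¹ : CliffordAlgebra Q))
            * (involute (↑u : CliffordAlgebra Q) * ι Q v * (↑u⁻¹ : CliffordAlgebra Q))
          = ↑u * (ι Q v * (ι Q v * (↑u⁻¹ : CliffordAlgebra Q))) := by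
            simp only [mul_assoc]
            rw [hmid]
        _ = ↑u * (algebraMap F (CliffordAlgebra Q) (Q v) * (↑u⁻¹ : CliffordAlgebra Q)) := by
            rw [← mul_assoc (ι Q v), ι_sq_scalar]
        _ = algebraMap F (CliffordAlgebra Q) (Q v) := by
            rw [Algebra.commutes, ← mul_assoc, Units.mul_inv, one_mul]
    have hSiso : ∀ x y, S (σ x) (σ y) = S x y := by
      intro x y
      have h1 := hQiso (x + y)
      rw [map_add] at h1
      rw [hQ, hQ] at h1
      have h2 := hQiso x
      rw [hQ, hQ] at h2
      have h3 := hQiso y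
      rw [hQ, hQ] at h3
      simp only [map_add, LinearMap.add_apply] at h1
      have h4 : 2 * S (σ x) (σ y) = 2 * S x y := by
        linear_combination -h1 + h2 + h3 - hS (σ y) (σ x) + hS y x
      exact mul_left_cancel₀ hchar h4
    obtain ⟨l, hl, hσl⟩ := cartan_dieudonne hchar (finrank F V) V S rfl hS hnd σ hSiso
    obtain ⟨U, hUrel, hUmem⟩ := rel_prod Q S hQ hpolar l hl
    rw [← hσl] at hUrel
    obtain ⟨c, hcz⟩ := kernel_scalar Q e horth hdual _ (rel_compare Q hUrel hrel)
    have hueq : (↑u : CliffordAlgebra Q) = ↑U * algebraMap F (CliffordAlgebra Q) c := by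
      have h5 : (↑(U⁻¹ * u) : CliffordAlgebra Q) = algebraMap F _ c := hcz
      rw [Units.val_mul] at h5
      calc (↑u : CliffordAlgebra Q) = ↑U * ((↑U⁻¹ : CliffordAlgebra Q) * ↑u) := by
            rw [← mul_assoc, Units.mul_inv, one_mul]
        _ = ↑U * algebraMap F _ c := by rw [h5]
    have humem : (↑u : CliffordAlgebra Q) ∈ evenOdd Q ((l.length : ZMod 2)) := by
      rw [hueq]
      have h6 := Submodule.mul_mem_mul hUmem (algebraMap_mem_evenOdd_zero Q c)
      have h7 := evenOdd_mul_le (Q := Q) (l.length : ZMod 2) 0 h6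
      rwa [add_zero] at h7
    have hdet : LinearMap.det σ = (-1 : F) ^ l.length := by
      rw [hσl]
      exact prod_rfl'_det l hl
    constructor
    · intro hd1
      have heven : Even l.length := by
        rcases Nat.even_or_odd l.length with hev | ho
        · exact hev
        · exfalso
          rw [hdet, ho.neg_one_pow] at hd1
          exact hneg1 hd1
      rw [hcast_even _ heven] at humem
      exact involute_eq_of_mem_even humem
    · intro hinvu
      have hu0 : (↑u : CliffordAlgebra Q) ∈ evenOdd Q 0 :=
        even_of_involute_fixed Q hchar hinvu
      rw [hdet]
      rcases Nat.even_or_odd l.length with hev | ho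
      · exact hev.neg_one_pow
      · exfalso
        rw [hcast_odd _ ho] at humem
        have h8 : (↑u : CliffordAlgebra Q) = 0 :=
          (Submodule.disjoint_def.mp (evenOdd_isCompl Q).disjoint) _ hu0 humem
        exact Units.ne_zero u h8
  · -- Part 2
    intro u _hinvu
    constructor
    · intro hfix
      have hz : ∀ v, (↑u : CliffordAlgebra Q) * ι Q v
          = ι Q v * involute (↑u : CliffordAlgebra Q) := by
        intro v
        have h2 : involute (↑u⁻¹ : CliffordAlgebra Q) * involute (↑u : CliffordAlgebra Q) = 1 := by
          rw [← map_mul, Units.inv_mul, map_one]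
        have h3 : ((↑u : CliffordAlgebra Q) * ι Q v * involute (↑u⁻¹ : CliffordAlgebra Q))
            * involute (↑u : CliffordAlgebra Q) = ↑u * ι Q v := by
          rw [mul_assoc (↑u * ι Q v), h2, mul_one]
        rw [← h3, hfix v]
    
      obtain ⟨c, hc⟩ := kernel_scalar Q e horth hdual _ hz
      refine ⟨c, ?_, hc⟩
      intro h0
      rw [h0, map_zero] at hc
      exact Units.ne_zero u hc
    · rintro ⟨c, hc0, hc⟩ v
      have hu' : (↑u⁻¹ : CliffordAlgebra Q) = algebraMap F _ c⁻¹ := by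
        apply Units.inv_eq_of_mul_eq_one_right
        rw [hc, ← map_mul, mul_inv_cancel₀ hc0, map_one]
      rw [hu', AlgHom.commutes, hc, Algebra.commutes c (ι Q v), mul_assoc, ← map_mul,
        mul_inv_cancel₀ hc0, map_one, mul_one]
  · -- Part 3
    intro τ hτiso hτdet
    obtain ⟨l, hl, hσl⟩ := cartan_dieudonne hchar (finrank F V) V S rfl hS hnd
      (τ : V →ₗ[F] V) hτiso
    obtain ⟨U, hUrel, hUmem⟩ := rel_prod Q S hQ hpolar l hl
    rw [← hσl] at hUrel
    have heven : Even l.length := by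
      rcases Nat.even_or_odd l.length with hev | ho
      · exact hev
      · exfalso
        rw [hσl, prod_rfl'_det l hl, ho.neg_one_pow] at hτdet
        exact hneg1 hτdet
    rw [hcast_even _ heven] at hUmem
    refine ⟨U, involute_eq_of_mem_even hUmem, ?_⟩
    intro v
    exact hUrel v
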